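/- Fix an integer g ≥ 0. Let f be a squarefree complex polynomial of degree exactly 2g+2, and let U, V, W be complex polynomials of degree at most g+1 with V² + U·W = f. Then for every complex polynomial P of degree at most 2g+2 there exist complex polynomials u, v, w of degree at most g+1 such that W·u + 2·V·v + U·w = P. (This is the Jacobian criterion form of the statement that the affine variety S(f) is smooth for any polynomial f without multiple roots.) -/

import Mathlib

open Polynomial

/-- Key surjectivity lemma: if `X` has degree exactly `n > 0`, `Y, Z` have degree at most `n`,
and `(X, Y, Z)` generate the unit ideal, then every `P` of degree at most `2n` is a combination
`X*x + Y*y + Z*z` with coefficients of degree at most `n`. -/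
lemma key_surj (n : ℕ) (hn : 0 < n) (X Y Z P A B D : Polynomial ℂ)
    (hX : X.natDegree = n) (hY : Y.natDegree ≤ n) (hZ : Z.natDegree ≤ n)
    (hbez : A * X + B * Y + D * Z = 1) (hP : P.natDegree ≤ 2 * n) :
    ∃ x y z : Polynomial ℂ,
      x.natDegree ≤ n ∧ y.natDegree ≤ n ∧ z.natDegree ≤ n ∧ X * x + Y * y + Z * z = P := by
  have hX0 : X ≠ 0 := by
    intro h; rw [h] at hX; simp at hX; omega
  set c := X.leadingCoeff with hc
  have hc0 : c ≠ 0 := leadingCoeff_ne_zero.mpr hX0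
  set M : Polynomial ℂ := X * C c⁻¹ with hM
  have hMmonic : M.Monic := monic_mul_leadingCoeff_inv hX0
  have hM0 : M ≠ 0 := hMmonic.ne_zero
  have hMdeg : M.natDegree = n := by
    rw [hM, natDegree_mul hX0 (by simpa using inv_ne_zero hc0), natDegree_C, hX, add_zero]
  set y : Polynomial ℂ := (B * P) %ₘ M with hy
  set z : Polynomial ℂ := (D * P) %ₘ M with hz
  set x : Polynomial ℂ := A * P + C c⁻¹ * (Y * ((B * P) /ₘ M) + Z * ((D * P) /ₘ M)) with hx
  have h1 : y + M * ((B * P) /ₘ M) = B * P := modByMonic_add_div _ M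
  have h2 : z + M * ((D * P) /ₘ M) = D * P := modByMonic_add_div _ M
  have heq : X * x + Y * y + Z * z = P := by
    rw [hx, hM] at *
    linear_combination P * hbez + Y * h1 + Z * h2
  have hmod : ∀ Q : Polynomial ℂ, (Q %ₘ M).natDegree ≤ n := by
    intro Q
    have h := degree_modByMonic_lt Q hMmonic
    rw [degree_eq_natDegree hM0, hMdeg] at h
    exact natDegree_le_iff_degree_le.mpr h.le
  have hyd : y.natDegree ≤ n := by rw [hy]; exact hmod _
  have hzd : z.natDegree ≤ n := by rw [hz]; exact hmod _
  refine ⟨x, y, z, ?_, hyd, hzd, heq⟩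
  by_cases hx0 : x = 0
  · simp [hx0]
  · have hXx : X * x = P - Y * y - Z * z := by linear_combination heq
    have hbound : (P - Y * y - Z * z).natDegree ≤ 2 * n := by
      refine (natDegree_sub_le _ _).trans (max_le ((natDegree_sub_le _ _).trans (max_le hP ?_)) ?_)
      · exact (natDegree_mul_le).trans (by omega)
      · exact (natDegree_mul_le).trans (by omega)
    have := natDegree_mul hX0 hx0
    rw [hXx] at this
    omega

theorem matrix_model_smooth
    (g : ℕ) (f U V W : Polynomial ℂ)
    (hsq : Squarefree f) (hdeg : f.natDegree = 2 * g + 2)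
    (hU : U.natDegree ≤ g + 1) (hV : V.natDegree ≤ g + 1) (hW : W.natDegree ≤ g + 1)
    (hf : V ^ 2 + U * W = f) :
    ∀ P : Polynomial ℂ, P.natDegree ≤ 2 * g + 2 →
      ∃ u v w : Polynomial ℂ,
        u.natDegree ≤ g + 1 ∧ v.natDegree ≤ g + 1 ∧ w.natDegree ≤ g + 1 ∧
        W * u + 2 * V * v + U * w = P := by
  intro P hP
  have hsep : f.Separable := PerfectField.separable_iff_squarefree.mpr hsq
  obtain ⟨a, b, h1⟩ := hsep
  have hder : derivative f
      = 2 * V * derivative V + (derivative U * W + U * derivative W) := by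
    rw [← hf]
    simp only [derivative_add, derivative_mul, derivative_pow, map_ofNat]
    push_cast
    simp only [map_ofNat]
    ring
  have hbez : (a * W + b * derivative W) * U + (a * V + 2 * b * derivative V) * V
      + (b * derivative U) * W = 1 := by
    linear_combination h1 + a * hf - b * hder
  have h2 : (Polynomial.C (2⁻¹ : ℂ)) * 2 = (1 : Polynomial ℂ) := by
    rw [← map_ofNat (Polynomial.C : ℂ →+* Polynomial ℂ) 2, ← C_mul]
    norm_num
  have h2V : (2 * V).natDegree = V.natDegree := by
    rw [← map_ofNat (Polynomial.C : ℂ →+* Polynomial ℂ) 2, natDegree_C_mul (by norm_num)]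
  have hcase : U.natDegree = g + 1 ∨ V.natDegree = g + 1 ∨ W.natDegree = g + 1 := by
    by_contra hcon
    push_neg at hcon
    obtain ⟨hu', hv', hw'⟩ := hcon
    have hVV : (V ^ 2).natDegree = 2 * V.natDegree := natDegree_pow _ _
    have hUW : (U * W).natDegree ≤ U.natDegree + W.natDegree := natDegree_mul_le
    have : f.natDegree ≤ 2 * g + 1 := by
      rw [← hf]
      refine (natDegree_add_le _ _).trans (max_le ?_ ?_) <;> omega
    omega
  rcases hcase with hc | hc | hc
  · obtain ⟨x, y, z, hx, hy, hz, heq⟩ := key_surj (g + 1) (by omega) U (2 * V) W P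
      (a * W + b * derivative W) (Polynomial.C (2⁻¹ : ℂ) * (a * V + 2 * b * derivative V))
      (b * derivative U) hc (by omega) hW
      (by linear_combination hbez + (a * V + 2 * b * derivative V) * V * h2) (by omega)
    exact ⟨z, y, x, hz, hy, hx, by linear_combination heq⟩
  · obtain ⟨x, y, z, hx, hy, hz, heq⟩ := key_surj (g + 1) (by omega) (2 * V) W U P
      (Polynomial.C (2⁻¹ : ℂ) * (a * V + 2 * b * derivative V)) (b * derivative U)
      (a * W + b * derivative W) (by omega) hW hU
      (by linear_combination hbez + (a * V + 2 * b * derivative V) * V * h2) (by omega)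
    exact ⟨y, x, z, hy, hx, hz, by linear_combination heq⟩
  · obtain ⟨x, y, z, hx, hy, hz, heq⟩ := key_surj (g + 1) (by omega) W (2 * V) U P
      (b * derivative U) (Polynomial.C (2⁻¹ : ℂ) * (a * V + 2 * b * derivative V))
      (a * W + b * derivative W) hc (by omega) hU
      (by linear_combination hbez + (a * V + 2 * b * derivative V) * V * h2) (by omega)
    exact ⟨x, y, z, hx, hy, hz, by linear_combination heq⟩
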